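/- Let Σ be a positive definite symmetric n×n real matrix and let μ be the centered Gaussian measure N(0,Σ) on ℝ^n. Let g : ℝ^n → [0,∞] be measurable and symmetric, i.e. g(−x) = g(x) for all x. Then for every y ∈ ℝ^n, ∫ g(x+y) μ(dx) ≥ exp(−½ yᵀΣ⁻¹y) · ∫ g(x) μ(dx). -/

import Mathlib

open MeasureTheory Matrix

noncomputable section

/-- The multivariate Gaussian measure `N(0,Σ)` on `ℝ^n` for a positive definite covariance
matrix `Σ`, given by its Lebesgue density
`(2π)^{-n/2} (det Σ)^{-1/2} exp(-½ xᵀ Σ⁻¹ x)`. -/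
def multivariateGaussianN (n : ℕ) (S : Matrix (Fin n) (Fin n) ℝ) : Measure (Fin n → ℝ) :=
  volume.withDensity fun x =>
    ENNReal.ofReal ((2 * Real.pi) ^ (-(n : ℝ) / 2) * S.det ^ (-(1 : ℝ) / 2) *
      Real.exp (-(1 / 2) * (x ⬝ᵥ S⁻¹ *ᵥ x)))

/-- Lower bound for Gaussian integrals of symmetric functions under translation
(a consequence of the Cameron–Martin formula): for `μ = N(0,Σ)` with `Σ` positive definite
symmetric and `g ≥ 0` symmetric,
`∫ g(x+y) μ(dx) ≥ exp(-½ yᵀ Σ⁻¹ y) ∫ g(x) μ(dx)`. -/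
theorem gaussian_translate_symm_lower_bound
    (n : ℕ) (S : Matrix (Fin n) (Fin n) ℝ) (hS : S.PosDef)
    (g : (Fin n → ℝ) → ENNReal) (hg : Measurable g) (hsym : ∀ x, g (-x) = g x)
    (y : Fin n → ℝ) :
    ENNReal.ofReal (Real.exp (-(1 / 2) * (y ⬝ᵥ S⁻¹ *ᵥ y))) *
        ∫⁻ x, g x ∂(multivariateGaussianN n S) ≤
      ∫⁻ x, g (x + y) ∂(multivariateGaussianN n S) := by
  set A := S⁻¹ with hA
  set c : ℝ := (2 * Real.pi) ^ (-(n : ℝ) / 2) * S.det ^ (-(1 : ℝ) / 2) with hc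
  have hcpos : 0 < c :=
    mul_pos (Real.rpow_pos_of_pos (by positivity) _) (Real.rpow_pos_of_pos hS.det_pos _)
  set ρ : (Fin n → ℝ) → ℝ := fun x => c * Real.exp (-(1 / 2) * (x ⬝ᵥ A *ᵥ x)) with hρ
  have hρnonneg : ∀ x, 0 ≤ ρ x := fun x => by positivity
  have hQmeas : Measurable fun x : Fin n → ℝ => x ⬝ᵥ A *ᵥ x := by
    simp only [dotProduct, Matrix.mulVec]
    fun_prop
  have hρmeas : Measurable fun x => ENNReal.ofReal (ρ x) := by
    apply ENNReal.measurable_ofReal.comp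
    exact (measurable_const.mul ((hQmeas.const_mul _).exp))
  have hρeven : ∀ x, ρ (-x) = ρ x := by
    intro x
    simp [hρ, Matrix.mulVec_neg, dotProduct_neg, neg_dotProduct]
  -- express the Gaussian integrals as Lebesgue integrals against the density ρ
  have hwd : ∀ h : (Fin n → ℝ) → ENNReal, Measurable h →
      ∫⁻ x, h x ∂(multivariateGaussianN n S) = ∫⁻ x, ENNReal.ofReal (ρ x) * h x := by
    intro h hh
    rw [multivariateGaussianN, lintegral_withDensity_eq_lintegral_mul _ hρmeas hh]
    rfl
  have hgy : Measurable fun x => g (x + y) := hg.comp (measurable_add_const y)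
  set I : ENNReal := ∫⁻ x, g (x + y) ∂(multivariateGaussianN n S) with hI
  have h1 : I = ∫⁻ x, ENNReal.ofReal (ρ (x - y)) * g x := by
    rw [hI, hwd _ hgy]
    have : (fun x => ENNReal.ofReal (ρ x) * g (x + y)) =
        fun x => (fun z => ENNReal.ofReal (ρ (z - y)) * g z) (x + y) := by
      funext x; simp
    rw [this]
    exact lintegral_add_right_eq_self (μ := volume) (fun z => ENNReal.ofReal (ρ (z - y)) * g z) y
  have h2 : I = ∫⁻ x, ENNReal.ofReal (ρ (x + y)) * g x := by
    rw [hI, hwd _ hgy]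
    have e1 : (fun x => ENNReal.ofReal (ρ x) * g (x + y)) =
        fun x => (fun z => ENNReal.ofReal (ρ z) * g (z - y)) (-x) := by
      funext x
      have h' : g (-x - y) = g (x + y) := by
        rw [show (-x - y : Fin n → ℝ) = -(x + y) by abel, hsym]
      simp only [hρeven, h']
    have m1 : Measurable fun z => ENNReal.ofReal (ρ z) * g (z - y) := by
      exact hρmeas.mul (hg.comp (measurable_add_const (-y)))
    rw [e1, ← lintegral_map m1 measurable_neg, Measure.map_neg_eq_self]
    have e2 : (fun z => ENNReal.ofReal (ρ z) * g (z - y)) =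
        fun z => (fun w => ENNReal.ofReal (ρ (w + y)) * g w) (z + (-y)) := by
      funext z
      simp [sub_eq_add_neg]
    rw [e2]
    exact lintegral_add_right_eq_self (μ := volume) (fun w => ENNReal.ofReal (ρ (w + y)) * g w) (-y)
  -- pointwise bound
  have hquad : ∀ x : Fin n → ℝ,
      ((x - y) ⬝ᵥ A *ᵥ (x - y)) + ((x + y) ⬝ᵥ A *ᵥ (x + y)) =
        2 * (x ⬝ᵥ A *ᵥ x) + 2 * (y ⬝ᵥ A *ᵥ y) := by
    intro x
    simp only [Matrix.mulVec_sub, Matrix.mulVec_add, dotProduct_sub, dotProduct_add,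
      sub_dotProduct, add_dotProduct]
    ring
  have hpt : ∀ x : Fin n → ℝ,
      2 * (ENNReal.ofReal (Real.exp (-(1 / 2) * (y ⬝ᵥ A *ᵥ y))) * ENNReal.ofReal (ρ x)) ≤
        ENNReal.ofReal (ρ (x - y)) + ENNReal.ofReal (ρ (x + y)) := by
    intro x
    rw [← ENNReal.ofReal_mul (Real.exp_pos _).le, ← ENNReal.ofReal_add (hρnonneg _) (hρnonneg _),
      ← ENNReal.ofReal_ofNat, ← ENNReal.ofReal_mul (by norm_num)]
    apply ENNReal.ofReal_le_ofReal
    set u : ℝ := -(1 / 2) * ((x - y) ⬝ᵥ A *ᵥ (x - y)) with hu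
    set v : ℝ := -(1 / 2) * ((x + y) ⬝ᵥ A *ᵥ (x + y)) with hv
    have huv : u + v = -(x ⬝ᵥ A *ᵥ x) - (y ⬝ᵥ A *ᵥ y) := by
      rw [hu, hv]
      linarith [hquad x]
    have key : Real.exp (-(1 / 2) * (y ⬝ᵥ A *ᵥ y)) * Real.exp (-(1 / 2) * (x ⬝ᵥ A *ᵥ x)) =
        Real.exp (u / 2) * Real.exp (v / 2) := by
      rw [← Real.exp_add, ← Real.exp_add]
      congr 1
      rw [← add_div, huv]; ring
    have hu2 : Real.exp u = Real.exp (u / 2) * Real.exp (u / 2) := by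
      rw [← Real.exp_add]; ring_nf
    have hv2 : Real.exp v = Real.exp (v / 2) * Real.exp (v / 2) := by
      rw [← Real.exp_add]; ring_nf
    show 2 * (Real.exp (-(1 / 2) * (y ⬝ᵥ A *ᵥ y)) * (c * Real.exp (-(1 / 2) * (x ⬝ᵥ A *ᵥ x)))) ≤
      c * Real.exp u + c * Real.exp v
    rw [hu2, hv2]
    nlinarith [sq_nonneg (Real.exp (u / 2) - Real.exp (v / 2)), hcpos.le, key,
      Real.exp_pos (u / 2), Real.exp_pos (v / 2)]
  -- conclude
  have m1 : Measurable fun x => ENNReal.ofReal (ρ (x - y)) * g x := by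
    exact (hρmeas.comp (measurable_add_const (-y))).mul hg
  have m2 : Measurable fun x => ENNReal.ofReal (ρ (x + y)) * g x := by
    exact (hρmeas.comp (measurable_add_const y)).mul hg
  have main : 2 * (ENNReal.ofReal (Real.exp (-(1 / 2) * (y ⬝ᵥ A *ᵥ y))) *
      ∫⁻ x, g x ∂(multivariateGaussianN n S)) ≤ 2 * I := by
    rw [hwd g hg, ← mul_assoc, ← lintegral_const_mul' _ _ (by finiteness : (2 : ENNReal) *
      ENNReal.ofReal (Real.exp (-(1 / 2) * (y ⬝ᵥ A *ᵥ y))) ≠ ⊤)]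
    calc ∫⁻ x, 2 * ENNReal.ofReal (Real.exp (-(1 / 2) * (y ⬝ᵥ A *ᵥ y))) *
            (ENNReal.ofReal (ρ x) * g x)
        ≤ ∫⁻ x, (ENNReal.ofReal (ρ (x - y)) + ENNReal.ofReal (ρ (x + y))) * g x := by
          refine lintegral_mono fun x => ?_
          calc 2 * ENNReal.ofReal (Real.exp (-(1 / 2) * (y ⬝ᵥ A *ᵥ y))) *
                  (ENNReal.ofReal (ρ x) * g x)
              = 2 * (ENNReal.ofReal (Real.exp (-(1 / 2) * (y ⬝ᵥ A *ᵥ y))) *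
                  ENNReal.ofReal (ρ x)) * g x := by ring
            _ ≤ (ENNReal.ofReal (ρ (x - y)) + ENNReal.ofReal (ρ (x + y))) * g x :=
                mul_le_mul_left (hpt x) _
      _ = (∫⁻ x, ENNReal.ofReal (ρ (x - y)) * g x) +
            ∫⁻ x, ENNReal.ofReal (ρ (x + y)) * g x := by
          simp only [add_mul]
          exact lintegral_add_left m1 _
      _ = 2 * I := by rw [← h1, ← h2, two_mul]
  exact (ENNReal.mul_le_mul_iff_right (by norm_num) (by norm_num)).mp main

end
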